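/- Let D = {0,1}^N, let f : D → {1,…,N+1} be the function with f(x) equal to the smallest index i such that x_i = 1, and f(x) = N+1 if x is the all-zeros string, and let F be the Gram matrix of f. Then there is a feasible solution for γ(J − F) whose cost function c satisfies c(x) ≤ 3·√(f(x)) for all x ∈ D. -/

import Mathlib

open Finset

/-- A feasible solution for the filtered γ₂-norm SDP `γ(A)` on domain `D ⊆ {0,1}^N`,
with cost function `c`. -/
def GammaFeasible {N : ℕ} (D : Finset (Fin N → Bool))
    (A : (Fin N → Bool) → (Fin N → Bool) → ℝ)
    (c : (Fin N → Bool) → ℝ) : Prop :=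
  ∃ (d : ℕ) (u v : (Fin N → Bool) → Fin N → EuclideanSpace ℂ (Fin d)),
    (∀ x ∈ D, ∀ y ∈ D,
      ∑ j ∈ Finset.univ.filter (fun j => x j ≠ y j),
        (inner ℂ (u x j) (v y j) : ℂ) = (A x y : ℂ)) ∧
    (∀ x ∈ D, c x = max (∑ j, ‖u x j‖ ^ 2) (∑ j, ‖v x j‖ ^ 2))

/-- The Gram matrix of a function `f`. -/
def Gram {N : ℕ} {E : Type*} [DecidableEq E] (f : (Fin N → Bool) → E) :
    (Fin N → Bool) → (Fin N → Bool) → ℝ :=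
  fun x y => if f x = f y then 1 else 0

/-- The find-first-one function: `firstOne x` is the smallest index `i ∈ {1,…,N}`
(1-indexed) such that `x_i = 1`, and `N + 1` if `x` is the all-zeros string. -/
def firstOne {N : ℕ} (x : Fin N → Bool) : ℕ :=
  if h : (Finset.univ.filter (fun i => x i = true)).Nonempty then
    ((Finset.univ.filter (fun i => x i = true)).min' h : ℕ) + 1
  else N + 1

noncomputable def sig (j : ℕ) : ℝ := Real.sqrt (2 * Real.sqrt (j + 1))

lemma sig_pos (j : ℕ) : 0 < sig j := by
  apply Real.sqrt_pos.2
  positivity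

lemma sq_sig (j : ℕ) : sig j ^ 2 = 2 * Real.sqrt (j + 1) := by
  rw [sig, Real.sq_sqrt]; positivity

/-- 0-indexed first one, `N` if none. -/
noncomputable def a0 {N : ℕ} (x : Fin N → Bool) : ℕ :=
  if h : (Finset.univ.filter (fun i => x i = true)).Nonempty then
    ((Finset.univ.filter (fun i => x i = true)).min' h : ℕ)
  else N

lemma firstOne_eq {N : ℕ} (x : Fin N → Bool) : firstOne x = a0 x + 1 := by
  unfold firstOne a0; split <;> rfl

lemma a0_le {N : ℕ} (x : Fin N → Bool) : a0 x ≤ N := by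
  unfold a0; split
  · exact le_of_lt (Fin.is_lt _)
  · exact le_rfl

lemma x_of_lt_a0 {N : ℕ} (x : Fin N → Bool) (i : Fin N) (h : (i : ℕ) < a0 x) :
    x i = false := by
  by_contra hx
  have hx' : x i = true := by simpa using hx
  have hmem : i ∈ Finset.univ.filter (fun i => x i = true) := by simp [hx']
  have hne : (Finset.univ.filter (fun i => x i = true)).Nonempty := ⟨i, hmem⟩
  have := Finset.min'_le _ i hmem
  unfold a0 at h
  rw [dif_pos hne] at h
  exact absurd (Fin.le_def.mp this) (not_le.mpr h)

lemma x_a0 {N : ℕ} (x : Fin N → Bool) (h : a0 x < N) : x ⟨a0 x, h⟩ = true := by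
  by_cases hne : (Finset.univ.filter (fun i => x i = true)).Nonempty
  · have hmem := Finset.min'_mem _ hne
    have hx : x ((Finset.univ.filter (fun i => x i = true)).min' hne) = true := by
      simpa using hmem
    have : (⟨a0 x, h⟩ : Fin N) = (Finset.univ.filter (fun i => x i = true)).min' hne := by
      apply Fin.ext
      simp [a0, dif_pos hne]
    rw [this]; exact hx
  · exfalso
    unfold a0 at h
    rw [dif_neg hne] at h
    exact lt_irrefl _ h

noncomputable def coef {N : ℕ} (x : Fin N → Bool) (j : Fin N) : ℝ :=
  if (j : ℕ) < a0 x then (sig j)⁻¹ else if (j : ℕ) = a0 x then sig j else 0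

def trunc {N : ℕ} (j : Fin N) (x : Fin N → Bool) : Fin N → Bool :=
  fun i => if (i : ℕ) < (j : ℕ) then x i else false

lemma sum_inv_sqrt (a : ℕ) :
    ∑ j ∈ Finset.range a, (2 * Real.sqrt (j + 1))⁻¹ ≤ Real.sqrt a := by
  induction a with
  | zero => simp
  | succ n ih =>
    rw [Finset.sum_range_succ]
    have h1 : Real.sqrt n ^ 2 = n := Real.sq_sqrt (by positivity)
    have h2 : Real.sqrt (n + 1) ^ 2 = (n : ℝ) + 1 := Real.sq_sqrt (by positivity)
    have h3 : (0 : ℝ) < Real.sqrt (n + 1) := Real.sqrt_pos.2 (by positivity)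
    have h4 : (0 : ℝ) ≤ Real.sqrt n := Real.sqrt_nonneg _
    have key : Real.sqrt n + (2 * Real.sqrt (n + 1))⁻¹ ≤ Real.sqrt (n + 1) := by
      have h5 : (2 * Real.sqrt (n + 1))⁻¹ * (2 * Real.sqrt (n + 1)) = 1 := by
        field_simp
      nlinarith [sq_nonneg (Real.sqrt (n + 1) - Real.sqrt n), h5,
        mul_le_mul_of_nonneg_left (le_refl (Real.sqrt (n+1))) h4]
    have : Real.sqrt ((n : ℝ) + 1) = Real.sqrt ((n + 1 : ℕ) : ℝ) := by push_cast; ring_nf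
    calc ∑ j ∈ Finset.range n, (2 * Real.sqrt (j + 1))⁻¹ + (2 * Real.sqrt (n + 1))⁻¹
        ≤ Real.sqrt n + (2 * Real.sqrt (n + 1))⁻¹ := by linarith
      _ ≤ Real.sqrt (n + 1) := key
      _ = Real.sqrt ((n + 1 : ℕ) : ℝ) := by push_cast; ring_nf

noncomputable def emb (N : ℕ) : (Fin N → Bool) ≃ Fin (2 ^ N) :=
  Fintype.equivFinOfCardEq (by simp)

noncomputable def uVec {N : ℕ} (x : Fin N → Bool) (j : Fin N) :
    EuclideanSpace ℂ (Fin (2 ^ N)) :=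
  ((coef x j : ℝ) : ℂ) • EuclideanSpace.single (emb N (trunc j x)) (1 : ℂ)

lemma inner_uVec {N : ℕ} (x y : Fin N → Bool) (j : Fin N) :
    (inner ℂ (uVec x j) (uVec y j) : ℂ)
      = ((coef x j * coef y j : ℝ) : ℂ) * (if trunc j x = trunc j y then 1 else 0) := by
  unfold uVec
  rw [inner_smul_left, inner_smul_right, EuclideanSpace.inner_single_left]
  simp only [EuclideanSpace.single_apply, Complex.conj_ofReal, map_one, one_mul,
    Equiv.apply_eq_iff_eq]
  by_cases h : trunc j x = trunc j y
  · simp only [if_pos h, if_pos h.symm]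
    push_cast
    ring
  · have h2 : ¬ trunc j y = trunc j x := fun h' => h h'.symm
    simp only [if_neg h, if_neg h2]
    push_cast
    ring

lemma norm_uVec {N : ℕ} (x : Fin N → Bool) (j : Fin N) :
    ‖uVec x j‖ ^ 2 = coef x j ^ 2 := by
  unfold uVec
  rw [norm_smul]
  simp [sq_abs, Complex.norm_real]

lemma coef_nonneg {N : ℕ} (x : Fin N → Bool) (j : Fin N) : 0 ≤ coef x j := by
  unfold coef
  split_ifs
  · exact inv_nonneg.2 (sig_pos _).le
  · exact (sig_pos _).le
  · exact le_rfl

lemma gram_firstOne {N : ℕ} (x y : Fin N → Bool) :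
    Gram firstOne x y = if a0 x = a0 y then 1 else 0 := by
  simp [Gram, firstOne_eq]

lemma coef_mul {N : ℕ} (x y : Fin N → Bool) (m : Fin N) (hmem : x m ≠ y m)
    (hlt : ∀ i : Fin N, (i : ℕ) < (m : ℕ) → x i = y i) :
    coef x m * coef y m = 1 - Gram firstOne x y := by
  rw [gram_firstOne]
  rcases lt_trichotomy (a0 x) (a0 y) with h | h | h
  · -- m = a0 x
    have haN : a0 x < N := lt_of_lt_of_le h (a0_le y)
    have hma : (m : ℕ) = a0 x := by
      rcases lt_trichotomy ((m : ℕ)) (a0 x) with h1 | h1 | h1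
      · exact absurd ((x_of_lt_a0 x m h1).trans
          (x_of_lt_a0 y m (h1.trans h)).symm) hmem
      · exact h1
      · exfalso
        have hxa := x_a0 x haN
        have hya := x_of_lt_a0 y ⟨a0 x, haN⟩ (by simpa using h)
        have := hlt ⟨a0 x, haN⟩ (by simpa using h1)
        rw [hxa, hya] at this
        exact Bool.noConfusion this
    have hc1 : coef x m = sig m := by
      unfold coef
      rw [if_neg (by omega), if_pos hma]
    have hc2 : coef y m = (sig m)⁻¹ := by
      unfold coef
      rw [if_pos (by omega)]
    rw [hc1, hc2, mul_inv_cancel₀ (sig_pos _).ne', if_neg (by omega)]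
    ring
  · -- equal: coef x m = 0
    have hma : a0 x < (m : ℕ) := by
      rcases lt_trichotomy ((m : ℕ)) (a0 x) with h1 | h1 | h1
      · exact absurd ((x_of_lt_a0 x m h1).trans
          (x_of_lt_a0 y m (h1.trans_le h.le)).symm) hmem
      · exfalso
        have hmN : a0 x < N := h1 ▸ m.isLt
        have hxa := x_a0 x hmN
        have hya := x_a0 y (h ▸ hmN)
        have hmx : m = (⟨a0 x, hmN⟩ : Fin N) := Fin.ext h1
        rw [hmx] at hmem
        apply hmem
        rw [hxa]
        have : (⟨a0 x, hmN⟩ : Fin N) = (⟨a0 y, h ▸ hmN⟩ : Fin N) := Fin.ext h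
        rw [this, hya]
      · exact h1
    have hc1 : coef x m = 0 := by
      unfold coef
      rw [if_neg (by omega), if_neg (by omega)]
    rw [hc1, if_pos h]
    ring
  · -- m = a0 y
    have haN : a0 y < N := lt_of_lt_of_le h (a0_le x)
    have hma : (m : ℕ) = a0 y := by
      rcases lt_trichotomy ((m : ℕ)) (a0 y) with h1 | h1 | h1
      · exact absurd ((x_of_lt_a0 x m (h1.trans h)).trans
          (x_of_lt_a0 y m h1).symm) hmem
      · exact h1
      · exfalso
        have hya := x_a0 y haN
        have hxa := x_of_lt_a0 x ⟨a0 y, haN⟩ (by simpa using h)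
        have := hlt ⟨a0 y, haN⟩ (by simpa using h1)
        rw [hxa, hya] at this
        exact Bool.noConfusion this
    have hc1 : coef x m = (sig m)⁻¹ := by
      unfold coef
      rw [if_pos (by omega)]
    have hc2 : coef y m = sig m := by
      unfold coef
      rw [if_neg (by omega), if_pos hma]
    rw [hc1, hc2, inv_mul_cancel₀ (sig_pos _).ne', if_neg (by omega)]
    ring

lemma cost_bound {N : ℕ} (x : Fin N → Bool) :
    ∑ j : Fin N, coef x j ^ 2 ≤ 3 * Real.sqrt (firstOne x) := by
  have key : ∀ j : Fin N, coef x j ^ 2 =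
      (if (j : ℕ) < a0 x then (2 * Real.sqrt ((j : ℕ) + 1))⁻¹ else 0) +
      (if (j : ℕ) = a0 x then 2 * Real.sqrt (a0 x + 1) else 0) := by
    intro j
    unfold coef
    rcases lt_trichotomy ((j : ℕ)) (a0 x) with h | h | h
    · rw [if_pos h, if_pos h, if_neg (by omega), add_zero, inv_pow, sq_sig]
    · rw [if_neg (by omega), if_pos h, if_neg (by omega), if_pos h, sq_sig, h]
      norm_num
    · rw [if_neg (by omega), if_neg (by omega), if_neg (by omega), if_neg (by omega)]
      ring
  rw [Finset.sum_congr rfl (fun j _ => key j), Finset.sum_add_distrib]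
  rw [Fin.sum_univ_eq_sum_range
    (fun j => if j < a0 x then (2 * Real.sqrt ((j : ℕ) + 1))⁻¹ else 0)]
  rw [Fin.sum_univ_eq_sum_range
    (fun j => if j = a0 x then 2 * Real.sqrt (a0 x + 1) else 0)]
  have h1 : ∑ j ∈ Finset.range N, (if j < a0 x then (2 * Real.sqrt ((j : ℕ) + 1))⁻¹ else 0)
      = ∑ j ∈ Finset.range (a0 x), (2 * Real.sqrt ((j : ℕ) + 1))⁻¹ := by
    rw [← Finset.sum_filter]
    congr 1
    ext j
    simp only [Finset.mem_filter, Finset.mem_range]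
    have := a0_le x
    omega
  have h2 : ∑ j ∈ Finset.range N, (if j = a0 x then 2 * Real.sqrt (a0 x + 1) else 0)
      ≤ 2 * Real.sqrt (a0 x + 1) := by
    rw [Finset.sum_ite_eq' (Finset.range N) (a0 x)
      (fun _ => 2 * Real.sqrt (a0 x + 1))]
    split_ifs
    · exact le_rfl
    · positivity
  rw [h1]
  have h3 := sum_inv_sqrt (a0 x)
  have h4 : Real.sqrt (a0 x) ≤ Real.sqrt ((a0 x : ℝ) + 1) :=
    Real.sqrt_le_sqrt (by linarith)
  have h5 : ((firstOne x : ℕ) : ℝ) = (a0 x : ℝ) + 1 := by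
    rw [firstOne_eq]; push_cast; ring
  rw [h5]
  linarith

theorem find_first_one_sdp (N : ℕ) :
    ∃ c : (Fin N → Bool) → ℝ,
      GammaFeasible (Finset.univ : Finset (Fin N → Bool))
        (fun x y => 1 - Gram firstOne x y) c ∧
      ∀ x : Fin N → Bool, c x ≤ 3 * Real.sqrt (firstOne x) := by
  classical
  refine ⟨fun x => ∑ j, ‖uVec x j‖ ^ 2, ⟨2 ^ N, uVec, uVec, ?_, ?_⟩, ?_⟩
  · intro x _ y _
    by_cases hD : (Finset.univ.filter (fun j => x j ≠ y j)).Nonempty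
    · set s := Finset.univ.filter (fun j => x j ≠ y j) with hs
      set m := s.min' hD with hm
      have hmem : m ∈ s := Finset.min'_mem _ _
      have hxy : x m ≠ y m := by
        have := hmem
        rw [hs, Finset.mem_filter] at this
        exact this.2
      have hlt : ∀ i : Fin N, (i : ℕ) < (m : ℕ) → x i = y i := by
        intro i hi
        by_contra hne
        have hin : i ∈ s := by
          rw [hs, Finset.mem_filter]
          exact ⟨Finset.mem_univ _, hne⟩
        have := Finset.min'_le s i hin
        exact absurd (Fin.le_def.mp (hm ▸ this)) (not_le.mpr hi)
      rw [Finset.sum_eq_single m]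
      · rw [inner_uVec]
        have htr : trunc m x = trunc m y := by
          funext i
          unfold trunc
          by_cases hi : (i : ℕ) < (m : ℕ)
          · rw [if_pos hi, if_pos hi, hlt i hi]
          · rw [if_neg hi, if_neg hi]
        rw [if_pos htr, mul_one]
        exact_mod_cast congrArg (Complex.ofReal) (coef_mul x y m hxy hlt)
      · intro b hb hbm
        have hmb : (m : ℕ) < (b : ℕ) := by
          have h' : m ≤ b := Finset.min'_le s b hb
          have h'' : (m : ℕ) ≤ (b : ℕ) := Fin.le_def.mp h'
          rcases lt_or_eq_of_le h'' with h | h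
          · exact h
          · exact absurd (Fin.ext h.symm) hbm
        rw [inner_uVec]
        have htr : trunc b x ≠ trunc b y := by
          intro hEq
          have := congrFun hEq m
          unfold trunc at this
          rw [if_pos hmb, if_pos hmb] at this
          exact hxy this
        rw [if_neg htr, mul_zero]
      · intro h
        exact absurd hmem h
    · rw [Finset.not_nonempty_iff_eq_empty] at hD
      have hxy : x = y := by
        funext j
        by_contra hne
        have : j ∈ Finset.univ.filter (fun j => x j ≠ y j) := by
          rw [Finset.mem_filter]
          exact ⟨Finset.mem_univ _, hne⟩
        rw [hD] at this
        exact absurd this (Finset.notMem_empty _)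
      rw [hD, Finset.sum_empty]
      simp [Gram, hxy]
  · intro x _
    rw [max_self]
  · intro x
    calc ∑ j, ‖uVec x j‖ ^ 2 = ∑ j, coef x j ^ 2 :=
          Finset.sum_congr rfl (fun j _ => norm_uVec x j)
      _ ≤ 3 * Real.sqrt (firstOne x) := cost_bound x
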